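/- Let $R>0$, $k\ge 1$, and $z_1,\dots,z_k\in\mathbb{C}$ with $2\max_i|z_i|<R$. Let $f$ be analytic on $D=\{|z|<R\}$ with $f(0)=0$. If $\sum_{j=1}^k\frac{f(z)-f(z_j)}{z-z_j}=0$ for all $z\in D\setminus\{z_1,\dots,z_k\}$, then $f\equiv 0$ on $D$. -/

import Mathlib

open Polynomial Metric Filter Topology Finset

/-- If `g` is continuous at `w`, `s` is a neighborhood of `w`, and `g` vanishes on
`s` minus a finite set, then `g w = 0`. -/
lemma aux_zero (g : ℂ → ℂ) (w : ℂ) (hg : ContinuousAt g w) (s : Set ℂ)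
    (hs : s ∈ nhds w) (F : Set ℂ) (hF : F.Finite)
    (h0 : ∀ x ∈ s, x ∉ F → g x = 0) : g w = 0 := by
  have hV : s ∩ (F \ {w})ᶜ ∈ 𝓝 w := by
    refine Filter.inter_mem hs (IsOpen.mem_nhds ?_ ?_)
    · exact (hF.subset Set.diff_subset).isClosed.isOpen_compl
    · simp
  have h1 : Tendsto g (𝓝[≠] w) (𝓝 (g w)) := hg.tendsto.mono_left nhdsWithin_le_nhds
  have h2 : Tendsto g (𝓝[≠] w) (𝓝 0) := by
    have hev : g =ᶠ[𝓝[≠] w] fun _ => 0 := by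
      filter_upwards [mem_nhdsWithin_of_mem_nhds hV, self_mem_nhdsWithin] with x hx hxw
      exact h0 x hx.1 (fun hxF => hx.2 ⟨hxF, hxw⟩)
    exact Tendsto.congr' hev.symm tendsto_const_nhds

  exact tendsto_nhds_unique h1 h2

/-- Divide out all roots of `S` (all of which lie in the ball) from the identity
`S·f = T` on the ball. -/
lemma divide_out (R : ℝ) (f : ℂ → ℂ)
    (hf : ∀ w ∈ Metric.ball (0:ℂ) R, ContinuousAt f w) (n : ℕ) :
    ∀ S T : ℂ[X], S ≠ 0 → S.natDegree = n →
    (∀ w, S.eval w = 0 → w ∈ Metric.ball (0:ℂ) R) →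
    (∀ w ∈ Metric.ball (0:ℂ) R, S.eval w * f w = T.eval w) →
    ∃ U : ℂ[X], T = S * U ∧ ∀ w ∈ Metric.ball (0:ℂ) R, f w = U.eval w := by
  induction n with
  | zero =>
    intro S T hS0 hSdeg _ hid
    obtain ⟨c, hSc⟩ : ∃ c, S = C c := ⟨_, Polynomial.eq_C_of_natDegree_eq_zero hSdeg⟩
    have hc : c ≠ 0 := fun h => hS0 (by rw [hSc, h, map_zero])
    refine ⟨C c⁻¹ * T, ?_, ?_⟩
    · rw [hSc, ← mul_assoc, ← C_mul, mul_inv_cancel₀ hc, C_1, one_mul]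
    · intro w hw
      have h := hid w hw
      rw [hSc] at h
      simp only [eval_C] at h
      rw [eval_mul, eval_C, ← h]
      field_simp
  | succ n ih =>
    intro S T hS0 hSdeg hroots hid
    have hdegpos : 0 < S.degree := by
      rw [← Polynomial.natDegree_pos_iff_degree_pos, hSdeg]; omega
    obtain ⟨α, hα⟩ := Complex.exists_root hdegpos
    have hαball : α ∈ Metric.ball (0:ℂ) R := hroots α hα
    obtain ⟨S₁, hS₁⟩ : (X - C α) ∣ S := Polynomial.dvd_iff_isRoot.mpr hα
    have hS₁0 : S₁ ≠ 0 := fun h => hS0 (by rw [hS₁, h, mul_zero])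
    have hS₁deg : S₁.natDegree = n := by
      have h := Polynomial.natDegree_mul (p := X - C α) (q := S₁)
        (Polynomial.X_sub_C_ne_zero α) hS₁0
      rw [← hS₁, hSdeg, Polynomial.natDegree_X_sub_C] at h
      omega
    have hTα : T.eval α = 0 := by
      rw [← hid α hαball, hα.eq_zero, zero_mul]
    obtain ⟨T₁, hT₁⟩ : (X - C α) ∣ T := Polynomial.dvd_iff_isRoot.mpr hTα
    have hid₁ : ∀ w ∈ Metric.ball (0:ℂ) R, S₁.eval w * f w = T₁.eval w := by
      intro w hw
      have hz0 : (fun x => S₁.eval x * f x - T₁.eval x) w = 0 := by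
        apply aux_zero _ w ?_ (Metric.ball (0:ℂ) R)
          (Metric.isOpen_ball.mem_nhds hw) {α} (Set.finite_singleton α)
        · intro x hx hxα
          have hxα' : x - α ≠ 0 := sub_ne_zero.mpr (by simpa using hxα)
          have h := hid x hx
          rw [hS₁, hT₁] at h
          simp only [eval_mul, eval_sub, eval_X, eval_C] at h
          have h2 : (x - α) * (S₁.eval x * f x - T₁.eval x) = 0 := by linear_combination h
          rcases mul_eq_zero.mp h2 with h3 | h3
          · exact absurd h3 hxα'
          · simpa using h3
        · exact ((Polynomial.continuous S₁).continuousAt.mul (hf w hw)).sub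
            (Polynomial.continuous T₁).continuousAt
      simpa [sub_eq_zero] using hz0
    have hroots₁ : ∀ w, S₁.eval w = 0 → w ∈ Metric.ball (0:ℂ) R := by
      intro w hw
      exact hroots w (by rw [hS₁, eval_mul, hw, mul_zero])
    obtain ⟨U, hU, hfU⟩ := ih S₁ T₁ hS₁0 hS₁deg hroots₁ hid₁
    exact ⟨U, by rw [hT₁, hU, hS₁, mul_assoc], hfU⟩

/-- Injectivity of the operator `L`: if `∑ⱼ (f z - f zⱼ)/(z - zⱼ) = 0` on the
disk (off the points `zⱼ`) and `f 0 = 0`, then `f ≡ 0`. -/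
theorem L_injective (R : ℝ) (k : ℕ) (hk : 1 ≤ k) (z : Fin k → ℂ)
    (hz : ∀ i, 2 * ‖z i‖ < R)
    (f : ℂ → ℂ) (hf : DifferentiableOn ℂ f (Metric.ball (0 : ℂ) R))
    (hf0 : f 0 = 0)
    (heq : ∀ w ∈ Metric.ball (0 : ℂ) R, (∀ j, w ≠ z j) →
      ∑ j, (f w - f (z j)) / (w - z j) = 0) :
    ∀ w ∈ Metric.ball (0 : ℂ) R, f w = 0 := by
  haveI : Nonempty (Fin k) := ⟨⟨0, hk⟩⟩
  have hR : 0 < R := lt_of_le_of_lt (by positivity) (hz ⟨0, hk⟩)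
  have hmem : ∀ w : ℂ, w ∈ Metric.ball (0:ℂ) R ↔ ‖w‖ < R := by
    intro w; rw [Metric.mem_ball, Complex.dist_eq, sub_zero]
  have hfc : ∀ w ∈ Metric.ball (0:ℂ) R, ContinuousAt f w := fun w hw =>
    (hf.differentiableAt (Metric.isOpen_ball.mem_nhds hw)).continuousAt
  -- the polynomials
  set P : Fin k → ℂ[X] := fun j => ∏ i ∈ Finset.univ.erase j, (X - C (z i)) with hP
  set p : ℂ[X] := ∏ i, (X - C (z i)) with hp
  set S : ℂ[X] := ∑ j, P j with hS
  set T : ℂ[X] := ∑ j, C (f (z j)) * P j with hT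
  have hPp : ∀ j, (X - C (z j)) * P j = p := by
    intro j
    simp only [hP, hp]
    exact Finset.mul_prod_erase Finset.univ (fun i => X - C (z i)) (Finset.mem_univ j)
  have hPmonic : ∀ j, (P j).Monic := fun j =>
    Polynomial.monic_prod_of_monic _ _ (fun i _ => Polynomial.monic_X_sub_C (z i))
  have hPdeg : ∀ j, (P j).natDegree = k - 1 := by
    intro j
    simp only [hP]
    rw [Polynomial.natDegree_prod _ _ (fun i _ => Polynomial.X_sub_C_ne_zero (z i))]
    simp [Polynomial.natDegree_X_sub_C, Finset.card_erase_of_mem]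
  -- the key identity on the ball
  have hkey : ∀ w ∈ Metric.ball (0:ℂ) R, S.eval w * f w = T.eval w := by
    intro w hw
    have hz0 : (fun x => S.eval x * f x - T.eval x) w = 0 := by
      apply aux_zero _ w ?_ (Metric.ball (0:ℂ) R)
        (Metric.isOpen_ball.mem_nhds hw) (Set.range z) (Set.finite_range z)
      · intro x hx hxz
        have hxz' : ∀ j, x ≠ z j := fun j hj => hxz ⟨j, hj.symm⟩
        have hsum := heq x hx hxz'
        have hSx : S.eval x = ∑ j, (P j).eval x := by
          rw [hS, Polynomial.eval_finset_sum]
        have hTx : T.eval x = ∑ j, f (z j) * (P j).eval x := by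
          rw [hT, Polynomial.eval_finset_sum]
          simp [Polynomial.eval_mul]
        show S.eval x * f x - T.eval x = 0
        rw [hSx, hTx, Finset.sum_mul, ← Finset.sum_sub_distrib]
        have hterm : ∀ j : Fin k, (P j).eval x * f x - f (z j) * (P j).eval x
            = ((f x - f (z j)) / (x - z j)) * p.eval x := by
          intro j
          have hxj : x - z j ≠ 0 := sub_ne_zero.mpr (hxz' j)
          have hpx : p.eval x = (x - z j) * (P j).eval x := by
            rw [← hPp j]; simp [Polynomial.eval_mul]
          rw [hpx]
          field_simp
        rw [Finset.sum_congr rfl (fun j _ => hterm j), ← Finset.sum_mul, hsum, zero_mul]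
      · exact ((Polynomial.continuous S).continuousAt.mul (hfc w hw)).sub
          (Polynomial.continuous T).continuousAt
    simpa [sub_eq_zero] using hz0
  -- all roots of S lie in the ball
  have hroots : ∀ w, S.eval w = 0 → w ∈ Metric.ball (0:ℂ) R := by
    intro w hw
    by_contra hwb
    rw [hmem, not_lt] at hwb
    have hd : ∀ j, ‖z j‖ < ‖w - z j‖ := by
      intro j
      have h1 : ‖w‖ ≤ ‖w - z j‖ + ‖z j‖ := by
        calc ‖w‖ = ‖(w - z j) + z j‖ := by ring_nf
        _ ≤ _ := norm_add_le _ _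
      have := hz j
      linarith
    have hdne : ∀ j, w - z j ≠ 0 := by
      intro j h
      have h2 := hd j
      rw [h, norm_zero] at h2
      exact absurd h2 (norm_nonneg _).not_gt
    have hpw : p.eval w ≠ 0 := by
      rw [hp, Polynomial.eval_prod]
      exact Finset.prod_ne_zero_iff.mpr (fun j _ => by simpa using hdne j)
    have hA : 0 < (∑ j, w / (w - z j)).re := by
      rw [Complex.re_sum]
      apply Finset.sum_pos _ Finset.univ_nonempty
      intro j _
      have hwsub : (w - z j) + z j = w := by ring
      have hterm : w / (w - z j) = 1 + z j / (w - z j) := by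
        calc w / (w - z j) = ((w - z j) + z j) / (w - z j) := by rw [hwsub]
        _ = 1 + z j / (w - z j) := by rw [add_div, div_self (hdne j)]
      rw [hterm, Complex.add_re, Complex.one_re]
      have h1 : ‖z j / (w - z j)‖ < 1 := by
        rw [norm_div, div_lt_one (lt_of_le_of_lt (norm_nonneg _) (hd j))]
        exact hd j
      have h2 : |(z j / (w - z j)).re| ≤ ‖z j / (w - z j)‖ :=
        Complex.abs_re_le_norm _
      have h3 := abs_lt.mp (lt_of_le_of_lt h2 h1)
      linarith [h3.1]
    have hAne : (∑ j, w / (w - z j)) ≠ 0 := by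
      intro h
      rw [h] at hA
      simp at hA
    have hAp : (∑ j, w / (w - z j)) * p.eval w = w * S.eval w := by
      rw [Finset.sum_mul, hS, Polynomial.eval_finset_sum, Finset.mul_sum]
      refine Finset.sum_congr rfl fun j _ => ?_
      have hpx : p.eval w = (w - z j) * (P j).eval w := by
        rw [← hPp j]; simp [Polynomial.eval_mul]
      rw [hpx, ← mul_assoc, div_mul_cancel₀ _ (hdne j)]
    rw [hw, mul_zero] at hAp
    exact (mul_ne_zero hAne hpw) hAp
  -- degrees
  have hcoeff : S.coeff (k-1) = (k : ℂ) := by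
    rw [hS, Polynomial.finset_sum_coeff]
    have h1 : ∀ j : Fin k, (P j).coeff (k-1) = 1 := fun j => by
      have := (hPmonic j).coeff_natDegree
      rwa [hPdeg j] at this
    simp [h1]
  have hS0 : S ≠ 0 := by
    intro h
    rw [h, Polynomial.coeff_zero] at hcoeff
    have : (k : ℂ) ≠ 0 := Nat.cast_ne_zero.mpr (by omega)
    exact this hcoeff.symm
  have hSdeg : S.natDegree = k - 1 := by
    have hle : S.natDegree ≤ k - 1 := by
      rw [hS]
      exact Polynomial.natDegree_sum_le_of_forall_le _ _ (fun j _ => (hPdeg j).le)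
    have hge : k - 1 ≤ S.natDegree := by
      apply Polynomial.le_natDegree_of_ne_zero
      rw [hcoeff]
      exact Nat.cast_ne_zero.mpr (by omega)
    omega
  have hTdeg : T.natDegree ≤ k - 1 := by
    rw [hT]
    apply Polynomial.natDegree_sum_le_of_forall_le
    intro j _
    exact le_trans (Polynomial.natDegree_C_mul_le _ _) (hPdeg j).le
  obtain ⟨U, hU, hfU⟩ := divide_out R f hfc (k-1) S T hS0 hSdeg hroots hkey
  have hU0 : U.natDegree = 0 := by
    by_cases h : U = 0
    · simp [h]
    · have hm := Polynomial.natDegree_mul hS0 h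
      rw [← hU, hSdeg] at hm
      omega
  have hUc : U = C (U.coeff 0) := Polynomial.eq_C_of_natDegree_eq_zero hU0
  have h0ball : (0:ℂ) ∈ Metric.ball (0:ℂ) R := by rw [hmem]; simpa using hR
  have hc0 : U.coeff 0 = 0 := by
    have h := hfU 0 h0ball
    rw [hf0, hUc] at h
    simpa using h.symm
  intro w hw
  rw [hfU w hw, hUc, hc0]
  simp
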